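/- Let A be the 2×2 coloring matrix with rows (1,1) and (0,1). For n ≥ 2, the number of A-colored plane trees on n vertices equals C_{n-1} + D_n, where C_{n-1} counts plane trees on n vertices and D_n is the number of nonempty antichains over all plane trees with n vertices. -/

import Mathlib

inductive CTree (α : Type) : Type
  | node : α → List (CTree α) → CTree α

namespace CTree

def color {α : Type} : CTree α → α
  | node c _ => c

def children {α : Type} : CTree α → List (CTree α)
  | node _ ts => ts

def size {α : Type} : CTree α → ℕ
  | node _ ts => 1 + (ts.attach.map fun t => size t.1).sum
decreasing_by
  have := List.sizeOf_lt_of_mem t.2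
  simp only [CTree.node.sizeOf_spec]
  omega

def Valid {α : Type} (A : Matrix α α ℕ) : CTree α → Prop
  | node c ts => ∀ t ∈ ts, A c t.color = 1 ∧ Valid A t

end CTree

/-- Number of `A`-colored plane trees with `n` vertices and root color `i`. -/
noncomputable def colorCount {m : ℕ} (A : Matrix (Fin m) (Fin m) ℕ) (i : Fin m) (n : ℕ) : ℕ :=
  {t : CTree (Fin m) | t.Valid A ∧ t.size = n ∧ t.color = i}.ncard

/-- Total number of `A`-colored plane trees with `n` vertices. -/
noncomputable def totalCount {α : Type} (A : Matrix α α ℕ) (n : ℕ) : ℕ :=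
  {t : CTree α | t.Valid A ∧ t.size = n}.ncard

namespace CTree

/-- `t.IsVertex p` means the list of child indices `p` addresses a vertex of `t`. -/
def IsVertex {α : Type} : CTree α → List ℕ → Prop
  | _, [] => True
  | t, i :: p => ∃ h : i < t.children.length, (t.children.get ⟨i, h⟩).IsVertex p

end CTree

/-- `D_n`: the number of pairs (plane tree on `n` vertices, nonempty antichain of its
vertices), where an antichain contains no vertex that is an ancestor (proper prefix) of
another. -/
noncomputable def antichainCount (n : ℕ) : ℕ :=
  {ts : CTree Unit × Set (List ℕ) |
    ts.1.size = n ∧ ts.2.Nonempty ∧ (∀ p ∈ ts.2, ts.1.IsVertex p) ∧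
    ∀ p ∈ ts.2, ∀ q ∈ ts.2, p ≠ q → ¬ p <+: q}.ncard

namespace CTree

theorem ind' {α : Type} {P : CTree α → Prop}
    (h : ∀ c ts, (∀ t ∈ ts, P t) → P (node c ts)) : ∀ t, P t
  | node c ts => h c ts (fun t ht => ind' h t)
decreasing_by
  have := List.sizeOf_lt_of_mem ht
  simp only [CTree.node.sizeOf_spec]
  omega

theorem size_node {α : Type} (c : α) (ts : List (CTree α)) :
    (node c ts).size = 1 + (ts.map size).sum := by
  rw [size]
  congr 1
  rw [List.attach_map_val]

theorem size_pos {α : Type} (t : CTree α) : 1 ≤ t.size := by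
  obtain ⟨c, ts⟩ := t
  rw [size_node]
  omega

end CTree

namespace CTree

def strip : CTree (Fin 2) → CTree Unit
  | node _ ts => node () (ts.attach.map fun t => strip t.1)
decreasing_by
  have := List.sizeOf_lt_of_mem t.2
  simp only [CTree.node.sizeOf_spec]
  omega

theorem strip_node (c : Fin 2) (ts : List (CTree (Fin 2))) :
    strip (node c ts) = node () (ts.map strip) := by
  rw [strip, List.attach_map_val]

def ones : CTree Unit → CTree (Fin 2)
  | node _ ts => node 1 (ts.attach.map fun t => ones t.1)
decreasing_by
  have := List.sizeOf_lt_of_mem t.2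
  simp only [CTree.node.sizeOf_spec]
  omega

theorem ones_node (c : Unit) (ts : List (CTree Unit)) :
    ones (node c ts) = node 1 (ts.map ones) := by
  rw [ones, List.attach_map_val]

def zeros : CTree Unit → CTree (Fin 2)
  | node _ ts => node 0 (ts.attach.map fun t => zeros t.1)
decreasing_by
  have := List.sizeOf_lt_of_mem t.2
  simp only [CTree.node.sizeOf_spec]
  omega

theorem zeros_node (c : Unit) (ts : List (CTree Unit)) :
    zeros (node c ts) = node 0 (ts.map zeros) := by
  rw [zeros, List.attach_map_val]

theorem size_strip (t : CTree (Fin 2)) : (strip t).size = t.size := by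
  induction t using ind' with
  | h c ts ih =>
    rw [strip_node, size_node, size_node, List.map_map]
    congr 2
    exact List.map_congr_left fun a ha => ih a ha

theorem size_ones (t : CTree Unit) : (ones t).size = t.size := by
  induction t using ind' with
  | h c ts ih =>
    rw [ones_node, size_node, size_node, List.map_map]
    congr 2
    exact List.map_congr_left fun a ha => ih a ha

theorem size_zeros (t : CTree Unit) : (zeros t).size = t.size := by
  induction t using ind' with
  | h c ts ih =>
    rw [zeros_node, size_node, size_node, List.map_map]
    congr 2
    exact List.map_congr_left fun a ha => ih a ha

theorem strip_ones (t : CTree Unit) : strip (ones t) = t := by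
  induction t using ind' with
  | h c ts ih =>
    rw [ones_node, strip_node, List.map_map]
    have : ts.map (strip ∘ ones) = ts.map id :=
      List.map_congr_left fun a ha => ih a ha
    rw [this, List.map_id]

theorem strip_zeros (t : CTree Unit) : strip (zeros t) = t := by
  induction t using ind' with
  | h c ts ih =>
    rw [zeros_node, strip_node, List.map_map]
    have : ts.map (strip ∘ zeros) = ts.map id :=
      List.map_congr_left fun a ha => ih a ha
    rw [this, List.map_id]

theorem color_ones (t : CTree Unit) : (ones t).color = 1 := by
  obtain ⟨c, ts⟩ := t; rw [ones_node]; rfl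

theorem color_zeros (t : CTree Unit) : (zeros t).color = 0 := by
  obtain ⟨c, ts⟩ := t; rw [zeros_node]; rfl

end CTree

namespace CTree

local notation "Amat" => (!![1, 1; 0, 1] : Matrix (Fin 2) (Fin 2) ℕ)

theorem valid_node {α : Type} (A : Matrix α α ℕ) (c : α) (ts : List (CTree α)) :
    Valid A (node c ts) ↔ ∀ t ∈ ts, A c t.color = 1 ∧ Valid A t := by
  rw [Valid]

theorem valid_ones (t : CTree Unit) : Valid Amat (ones t) := by
  induction t using ind' with
  | h c ts ih =>
    rw [ones_node, valid_node]
    intro s hs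
    obtain ⟨a, ha, rfl⟩ := List.mem_map.mp hs
    refine ⟨?_, ih a ha⟩
    rw [color_ones]
    decide

theorem valid_zeros (t : CTree Unit) : Valid Amat (zeros t) := by
  induction t using ind' with
  | h c ts ih =>
    rw [zeros_node, valid_node]
    intro s hs
    obtain ⟨a, ha, rfl⟩ := List.mem_map.mp hs
    refine ⟨?_, ih a ha⟩
    rw [color_zeros]
    decide

theorem eq_ones_of_valid (t : CTree (Fin 2)) (hv : Valid Amat t) (hc : t.color = 1) :
    t = ones (strip t) := by
  induction t using ind' with
  | h c ts ih =>
    rw [valid_node] at hv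
    have hc' : c = 1 := hc
    subst hc'
    rw [strip_node, ones_node, List.map_map]
    congr 1
    conv_lhs => rw [← List.map_id ts]
    refine (List.map_congr_left fun a ha => ?_).symm
    have h1 := (hv a ha).1
    have h2 := (hv a ha).2
    have hca : a.color = 1 := by
      rcases (by omega : a.color = 0 ∨ a.color = 1) with h | h
      · rw [h] at h1; exact absurd h1 (by decide)
      · exact h
    exact ((ih a ha) h2 hca).symm

end CTree

namespace CTree

def inMins : CTree (Fin 2) → List ℕ → Prop
  | t, [] => t.color = 1
  | t, i :: p => t.color = 0 ∧ ∃ h : i < t.children.length, inMins (t.children.get ⟨i, h⟩) p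

theorem inMins_nil (t : CTree (Fin 2)) : inMins t [] ↔ t.color = 1 := by rw [inMins]

theorem inMins_cons (t : CTree (Fin 2)) (i : ℕ) (p : List ℕ) :
    inMins t (i :: p) ↔
      t.color = 0 ∧ ∃ h : i < t.children.length, inMins (t.children.get ⟨i, h⟩) p := by
  rw [inMins]

theorem inMins_antichain : ∀ (p : List ℕ) (t : CTree (Fin 2)) (q : List ℕ),
    inMins t p → inMins t q → p <+: q → p = q
  | [], t, [], _, _, _ => rfl
  | [], t, j :: q, hp, hq, _ => by
      rw [inMins_nil] at hp
      rw [inMins_cons] at hq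
      rw [hp] at hq
      exact absurd hq.1 (by decide)
  | i :: p, t, [], hp, hq, hpre => absurd hpre (by simp)
  | i :: p, t, j :: q, hp, hq, hpre => by
      obtain ⟨hij, hpq⟩ := List.cons_prefix_cons.mp hpre
      subst hij
      rw [inMins_cons] at hp hq
      obtain ⟨-, h1, hp'⟩ := hp
      obtain ⟨-, h2, hq'⟩ := hq
      have := inMins_antichain p _ q hp' (by convert hq' using 2) hpq
      rw [this]

theorem isVertex_of_inMins : ∀ (p : List ℕ) (t : CTree (Fin 2)), inMins t p → IsVertex t p
  | [], t, _ => trivial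
  | i :: p, t, hp => by
      rw [inMins_cons] at hp
      obtain ⟨-, h, hp'⟩ := hp
      exact ⟨h, isVertex_of_inMins p _ hp'⟩

theorem isVertex_strip : ∀ (p : List ℕ) (t : CTree (Fin 2)),
    IsVertex (strip t) p ↔ IsVertex t p
  | [], t => Iff.rfl
  | i :: p, t => by
      obtain ⟨c, ts⟩ := t
      rw [IsVertex, IsVertex, strip_node]
      simp only [children, List.length_map, List.get_eq_getElem, List.getElem_map]
      exact exists_congr fun h => isVertex_strip p _

theorem not_inMins_zeros (t : CTree Unit) : ∀ (p : List ℕ), ¬ inMins (zeros t) p := by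
  induction t using ind' with
  | h c ts ih =>
    intro p hp
    rw [zeros_node] at hp
    cases p with
    | nil =>
        rw [inMins_nil] at hp
        simp only [color] at hp
        exact absurd hp (by decide)
    | cons i q =>
        rw [inMins_cons] at hp
        obtain ⟨-, h, hp'⟩ := hp
        simp only [children, List.length_map, List.get_eq_getElem, List.getElem_map] at h hp'
        exact ih _ (List.getElem_mem h) q hp'

theorem inMins_ones (t : CTree Unit) (p : List ℕ) : inMins (ones t) p ↔ p = [] := by
  cases p with
  | nil => simp [inMins_nil, color_ones]
  | cons i q =>
      rw [inMins_cons, color_ones]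
      simp only [List.cons_ne_nil, iff_false]
      rintro ⟨h, -⟩
      exact absurd h (by decide)

end CTree
namespace CTree

open scoped Classical in
noncomputable def paintList : List (CTree Unit) → ℕ → Set (List ℕ) → List (CTree (Fin 2))
  | [], _, _ => []
  | node _ cs :: ts, k, S =>
      (if [] ∈ {p : List ℕ | k :: p ∈ S} then ones (node () cs)
       else node 0 (paintList cs 0 {p : List ℕ | k :: p ∈ S})) :: paintList ts (k + 1) S
termination_by ts _ _ => sizeOf ts
decreasing_by
  · simp only [List.cons.sizeOf_spec, CTree.node.sizeOf_spec]; omega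
  · simp only [List.cons.sizeOf_spec, CTree.node.sizeOf_spec]; omega

open scoped Classical in
noncomputable def paint (u : CTree Unit) (S : Set (List ℕ)) : CTree (Fin 2) :=
  if [] ∈ S then ones u else node 0 (paintList u.children 0 S)

theorem paintList_cons (t : CTree Unit) (ts : List (CTree Unit)) (k : ℕ) (S : Set (List ℕ)) :
    paintList (t :: ts) k S = paint t {p | k :: p ∈ S} :: paintList ts (k + 1) S := by
  obtain ⟨c, cs⟩ := t
  rw [paintList, paint]
  rfl

theorem length_paintList : ∀ (ts : List (CTree Unit)) (k : ℕ) (S : Set (List ℕ)),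
    (paintList ts k S).length = ts.length
  | [], _, _ => by rw [paintList]; rfl
  | t :: ts, k, S => by
      rw [paintList_cons, List.length_cons, List.length_cons, length_paintList]

theorem getElem_paintList : ∀ (ts : List (CTree Unit)) (k : ℕ) (S : Set (List ℕ)) (j : ℕ)
    (h : j < ts.length),
    (paintList ts k S)[j]'(by rw [length_paintList]; exact h) =
      paint ts[j] {p | (k + j) :: p ∈ S}
  | t :: ts, k, S, 0, h => by
      simp only [paintList_cons, List.getElem_cons_zero, Nat.add_zero]
  | t :: ts, k, S, j + 1, h => by
      simp only [paintList_cons, List.getElem_cons_succ]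
      have := getElem_paintList ts (k + 1) S j (by simpa using h)
      simp only [show k + 1 + j = k + (j + 1) from by omega] at this
      exact this

theorem mem_paintList : ∀ {t : CTree (Fin 2)} (ts : List (CTree Unit)) (k : ℕ)
    (S : Set (List ℕ)), t ∈ paintList ts k S → ∃ s ∈ ts, ∃ S', t = paint s S'
  | t, [], _, _, ht => by rw [paintList] at ht; exact absurd ht List.not_mem_nil
  | t, s :: ts, k, S, ht => by
      rw [paintList_cons] at ht
      rcases List.mem_cons.mp ht with h | h
      · exact ⟨s, List.mem_cons_self, _, h⟩
      · obtain ⟨a, ha, S', hS'⟩ := mem_paintList ts (k + 1) S h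
        exact ⟨a, List.mem_cons_of_mem s ha, S', hS'⟩

local notation "Amat" => (!![1, 1; 0, 1] : Matrix (Fin 2) (Fin 2) ℕ)

theorem valid_paint (u : CTree Unit) : ∀ S : Set (List ℕ), Valid Amat (paint u S) := by
  induction u using ind' with
  | h c ts ih =>
    intro S
    rw [paint]
    split
    · exact valid_ones _
    · rw [valid_node]
      intro t ht
      simp only [children] at ht
      obtain ⟨s, hs, S', rfl⟩ := mem_paintList ts 0 S ht
      refine ⟨?_, ih s hs S'⟩
      rcases (by omega : (paint s S').color = 0 ∨ (paint s S').color = 1) with h | h <;>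
        rw [h] <;> decide

theorem strip_paint (u : CTree Unit) : ∀ S : Set (List ℕ), strip (paint u S) = u := by
  induction u using ind' with
  | h c ts ih =>
    intro S
    rw [paint]
    split
    · exact strip_ones _
    · simp only [children]
      rw [strip_node]
      cases c
      congr 1
      apply List.ext_getElem
      · rw [List.length_map, length_paintList]
      · intro i h1 h2
        have hi : i < ts.length := by
          rw [List.length_map, length_paintList] at h1; exact h1
        rw [List.getElem_map]
        have := getElem_paintList ts 0 S i hi
        simp only [Nat.zero_add] at this
        rw [this, ih _ (List.getElem_mem hi)]

theorem inMins_paint : ∀ (p : List ℕ) (u : CTree Unit) (S : Set (List ℕ)),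
    (∀ q ∈ S, IsVertex u q) →
    (∀ q ∈ S, ∀ r ∈ S, q ≠ r → ¬ q <+: r) →
    (inMins (paint u S) p ↔ p ∈ S)
  | p, u, S, hV, hA => by
    by_cases hnil : [] ∈ S
    · rw [paint, if_pos hnil, inMins_ones]
      constructor
      · rintro rfl; exact hnil
      · intro hp
        by_contra hne
        exact hA [] hnil p hp (fun h => hne h.symm) (List.nil_prefix)
    · rw [paint, if_neg hnil]
      obtain ⟨c, ts⟩ := u
      cases p with
      | nil =>
          rw [inMins_nil]
          simp only [color]
          constructor
          · intro h; exact absurd h (by decide)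
          · intro h; exact absurd h hnil
      | cons i q =>
          rw [inMins_cons]
          simp only [children, color, List.get_eq_getElem]
          have base : ∀ h : i < ts.length,
              inMins (paint ts[i] {r | i :: r ∈ S}) q ↔ q ∈ {r | i :: r ∈ S} := by
            intro h
            refine inMins_paint q ts[i] _ ?_ ?_
            · intro r hr
              obtain ⟨h', hv⟩ := hV (i :: r) hr
              simp only [children] at h' hv
              exact hv
            · intro a ha b hb hab hpre
              exact hA (i :: a) ha (i :: b) hb (by simpa using hab)
                (List.cons_prefix_cons.mpr ⟨rfl, hpre⟩)
          constructor
          · rintro ⟨-, h, hq⟩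
            rw [length_paintList] at h
            have := getElem_paintList ts 0 S i h
            simp only [Nat.zero_add] at this
            rw [this] at hq
            exact (base h).mp hq
          · intro hiq
            obtain ⟨h, -⟩ := hV (i :: q) hiq
            simp only [children] at h
            refine ⟨trivial, by rw [length_paintList]; exact h, ?_⟩
            have := getElem_paintList ts 0 S i h
            simp only [Nat.zero_add] at this
            rw [this]
            exact (base h).mpr hiq

theorem color_paint_of_not_mem (u : CTree Unit) (S : Set (List ℕ)) (h : [] ∉ S) :
    (paint u S).color = 0 := by
  rw [paint, if_neg h]
  rfl

end CTree
namespace CTree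

local notation "Amat" => (!![1, 1; 0, 1] : Matrix (Fin 2) (Fin 2) ℕ)

theorem eq_of_strip_mins (t : CTree (Fin 2)) : ∀ t' : CTree (Fin 2),
    Valid Amat t → Valid Amat t' → t.color = t'.color → strip t = strip t' →
    (∀ p, inMins t p ↔ inMins t' p) → t = t' := by
  induction t using ind' with
  | h c ts ih =>
    intro t' hv hv' hc hs hm
    obtain ⟨c', ts'⟩ := t'
    have hcc : c = c' := hc
    subst hcc
    rcases (by omega : c = 0 ∨ c = 1) with h0 | h1
    · subst h0
      rw [strip_node, strip_node, node.injEq] at hs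
      have hmap : ts.map strip = ts'.map strip := hs.2
      have hlen : ts.length = ts'.length := by
        have := congrArg List.length hmap
        simpa using this
      congr 1
      apply List.ext_getElem hlen
      intro i hi hi'
      have hstrip : strip ts[i] = strip ts'[i] := by
        have h1' := congrArg (fun l => l[i]?) hmap
        simp only [List.getElem?_map, List.getElem?_eq_getElem hi,
          List.getElem?_eq_getElem hi', Option.map_some] at h1'
        exact Option.some.inj h1'
      have hmi : ∀ p, inMins ts[i] p ↔ inMins ts'[i] p := by
        intro p
        have h2' := hm (i :: p)
        rw [inMins_cons, inMins_cons] at h2'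
        simp only [children, color, List.get_eq_getElem] at h2'
        constructor
        · intro hp
          obtain ⟨-, h', hp'⟩ := h2'.mp ⟨trivial, hi, hp⟩
          exact hp'
        · intro hp
          obtain ⟨-, h', hp'⟩ := h2'.mpr ⟨trivial, hi', hp⟩
          exact hp'
      have hcol : ts[i].color = ts'[i].color := by
        have hcc' := hmi []
        rw [inMins_nil, inMins_nil] at hcc'
        rcases (by omega : ts[i].color = 0 ∨ ts[i].color = 1) with ha | ha <;>
          rcases (by omega : ts'[i].color = 0 ∨ ts'[i].color = 1) with hb | hb <;>
          simp [ha, hb] at hcc' ⊢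
      rw [valid_node] at hv hv'
      exact ih ts[i] (List.getElem_mem hi) ts'[i] (hv _ (List.getElem_mem hi)).2
        (hv' _ (List.getElem_mem hi')).2 hcol hstrip hmi
    · subst h1
      calc node 1 ts = ones (strip (node 1 ts)) := eq_ones_of_valid _ hv rfl
        _ = ones (strip (node 1 ts')) := by rw [hs]
        _ = node 1 ts' := (eq_ones_of_valid _ hv' rfl).symm

def ofForest : List (CTree Unit) → Tree Unit
  | [] => BinaryTree.nil
  | node _ cs :: ts => BinaryTree.node () (ofForest cs) (ofForest ts)
termination_by l => sizeOf l
decreasing_by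
  · simp only [List.cons.sizeOf_spec, CTree.node.sizeOf_spec]; omega
  · simp only [List.cons.sizeOf_spec, CTree.node.sizeOf_spec]; omega

def toForest : Tree Unit → List (CTree Unit)
  | BinaryTree.nil => []
  | BinaryTree.node _ l r => node () (toForest l) :: toForest r

theorem ofForest_toForest : ∀ b : Tree Unit, ofForest (toForest b) = b
  | BinaryTree.nil => by rw [toForest, ofForest]
  | BinaryTree.node _ l r => by
      rw [toForest, ofForest, ofForest_toForest l, ofForest_toForest r]

theorem toForest_ofForest : ∀ ts : List (CTree Unit), toForest (ofForest ts) = ts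
  | [] => by rw [ofForest, toForest]
  | node c cs :: ts => by
      rw [ofForest, toForest, toForest_ofForest cs, toForest_ofForest ts]
termination_by l => sizeOf l
decreasing_by
  · simp only [List.cons.sizeOf_spec, CTree.node.sizeOf_spec]; omega
  · simp only [List.cons.sizeOf_spec, CTree.node.sizeOf_spec]; omega

theorem numNodes_ofForest : ∀ ts : List (CTree Unit),
    (ofForest ts).numNodes = (ts.map size).sum
  | [] => by rw [ofForest]; rfl
  | node c cs :: ts => by
      rw [ofForest]
      simp only [BinaryTree.numNodes, List.map_cons, List.sum_cons, size_node,
        numNodes_ofForest cs, numNodes_ofForest ts]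
      omega
termination_by l => sizeOf l
decreasing_by
  · simp only [List.cons.sizeOf_spec, CTree.node.sizeOf_spec]; omega
  · simp only [List.cons.sizeOf_spec, CTree.node.sizeOf_spec]; omega

theorem finite_isVertex {α : Type} (t : CTree α) : {p : List ℕ | IsVertex t p}.Finite := by
  induction t using ind' with
  | h c ts ih =>
    have hsub : {p : List ℕ | IsVertex (node c ts) p} ⊆
        insert [] (⋃ i : Fin ts.length,
          (List.cons i.1) '' {p | IsVertex (ts.get i) p}) := by
      intro p hp
      cases p with
      | nil => exact Set.mem_insert _ _
      | cons i q =>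
          obtain ⟨h, hq⟩ := hp
          simp only [children] at h hq
          refine Set.mem_insert_of_mem _ ?_
          exact Set.mem_iUnion.mpr ⟨⟨i, h⟩, ⟨q, hq, rfl⟩⟩
    refine Set.Finite.subset ?_ hsub
    exact Set.Finite.insert _
      (Set.finite_iUnion fun i => Set.Finite.image _ (ih _ (List.get_mem ts i)))

end CTree
theorem stmt19' (n : ℕ) (hn : 2 ≤ n) :
    totalCount (!![1, 1; 0, 1] : Matrix (Fin 2) (Fin 2) ℕ) n =
      catalan (n - 1) + antichainCount n := by
  classical
  open CTree in
  set A : Matrix (Fin 2) (Fin 2) ℕ := !![1, 1; 0, 1] with hA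
  set S0 : Set (CTree (Fin 2)) := {t | t.Valid A ∧ t.size = n ∧ t.color = 0} with hS0def
  set S1 : Set (CTree (Fin 2)) := {t | t.Valid A ∧ t.size = n ∧ t.color = 1} with hS1def
  set U : Set (CTree Unit) := {u | u.size = n} with hUdef
  set Pn : Set (CTree Unit × Set (List ℕ)) := {ts : CTree Unit × Set (List ℕ) |
    ts.1.size = n ∧ ts.2.Nonempty ∧ (∀ p ∈ ts.2, ts.1.IsVertex p) ∧
    ∀ p ∈ ts.2, ∀ q ∈ ts.2, p ≠ q → ¬ p <+: q} with hPndef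
  -- the Unit-tree count
  have hg : Function.Injective (fun b : Tree Unit => node () (toForest b)) := by
    intro a b h
    simp only [node.injEq, true_and] at h
    rw [← ofForest_toForest a, ← ofForest_toForest b, h]
  have hU : U = (fun b : Tree Unit => node () (toForest b)) ''
      {b : Tree Unit | b.numNodes = n - 1} := by
    ext u
    simp only [hUdef, Set.mem_setOf_eq, Set.mem_image]
    constructor
    · intro hu
      obtain ⟨c, ts⟩ := u
      refine ⟨ofForest ts, ?_, ?_⟩
      · rw [numNodes_ofForest]
        rw [size_node] at hu
        omega
      · rw [toForest_ofForest]
    · rintro ⟨b, hb, rfl⟩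
      rw [size_node, ← numNodes_ofForest, ofForest_toForest, hb]
      omega
  have hB : {b : Tree Unit | b.numNodes = n - 1} =
      ↑(Tree.treesOfNumNodesEq (n - 1)) := by
    ext b
    simp [BinaryTree.mem_treesOfNumNodesEq]
  have hUncard : U.ncard = catalan (n - 1) := by
    rw [hU, Set.ncard_image_of_injective _ hg, hB, Set.ncard_coe_finset,
      BinaryTree.treesOfNumNodesEq_card_eq_catalan]
  have hUfin : U.Finite := by
    rw [hU, hB]
    exact Set.Finite.image _ (Tree.treesOfNumNodesEq (n - 1)).finite_toSet
  -- S1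
  have hones_inj : Function.Injective ones := Function.LeftInverse.injective strip_ones
  have hS1 : S1 = ones '' U := by
    ext t
    constructor
    · rintro ⟨hv, hsz, hc⟩
      exact ⟨strip t, by rw [hUdef, Set.mem_setOf_eq, size_strip]; exact hsz,
        (eq_ones_of_valid t hv hc).symm⟩
    · rintro ⟨u, hu, rfl⟩
      exact ⟨valid_ones u, by rw [size_ones]; exact hu, color_ones u⟩
  have hS1card : S1.ncard = catalan (n - 1) := by
    rw [hS1, Set.ncard_image_of_injective _ hones_inj, hUncard]
  have hS1fin : S1.Finite := hS1 ▸ hUfin.image _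
  -- S0 via Φ
  set Φ : CTree (Fin 2) → CTree Unit × Set (List ℕ) :=
    fun t => (strip t, if {p | inMins t p} = ∅ then {[]} else {p | inMins t p}) with hΦdef
  have hΦP : Φ '' S0 = Pn := by
    ext ⟨u, S⟩
    constructor
    · rintro ⟨t, ⟨hv, hsz, hc⟩, heq⟩
      obtain ⟨h1, h2⟩ := Prod.mk.injEq .. ▸ heq
      subst h1; subst h2
      refine ⟨by simpa [size_strip] using hsz, ?_, ?_, ?_⟩
      · split_ifs with h
        · exact ⟨[], rfl⟩
        · exact Set.nonempty_iff_ne_empty.mpr h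
      · intro p hp
        split_ifs at hp with h
        · rcases hp with rfl
          trivial
        · exact (isVertex_strip p t).mpr (isVertex_of_inMins p t hp)
      · intro p hp q hq hne
        split_ifs at hp hq with h
        · rcases hp with rfl; rcases hq with rfl; exact absurd rfl hne
        · intro hpre
          exact hne (inMins_antichain p t q hp hq hpre)
    · rintro ⟨hsz, hne, hvert, hanti⟩
      by_cases hnil : [] ∈ S
      · have hS : S = {[]} := by
          apply Set.eq_singleton_iff_unique_mem.mpr
          refine ⟨hnil, fun q hq => ?_⟩
          by_contra hq0
          exact hanti [] hnil q hq (fun e => hq0 e.symm) List.nil_prefix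
        refine ⟨zeros u, ⟨valid_zeros u, by rw [size_zeros]; exact hsz, color_zeros u⟩, ?_⟩
        have hz : {p | inMins (zeros u) p} = ∅ := by
          ext p; simp [not_inMins_zeros]
        simp only [hΦdef, hz, strip_zeros, hS]
        simp
      · have hsz' : (paint u S).size = n := by
          have := size_strip (paint u S)
          rw [strip_paint] at this
          rw [← this]
          exact hsz
        refine ⟨paint u S, ⟨valid_paint u S, hsz', color_paint_of_not_mem u S hnil⟩, ?_⟩
        have hms : {p | inMins (paint u S) p} = S := by
          ext p; exact inMins_paint p u S hvert hanti
        have hSne : S ≠ ∅ := Set.nonempty_iff_ne_empty.mp hne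
        simp only [hΦdef, hms, if_neg hSne, strip_paint]
  have hΦinj : Set.InjOn Φ S0 := by
    rintro t ⟨hv, hsz, hc⟩ t' ⟨hv', hsz', hc'⟩ h
    simp only [hΦdef, Prod.mk.injEq] at h
    obtain ⟨hst, hif⟩ := h
    have hnilmem : ∀ s : CTree (Fin 2), s.color = 0 → [] ∉ {p | inMins s p} := by
      intro s hcs hp
      rw [Set.mem_setOf_eq, inMins_nil, hcs] at hp
      exact absurd hp (by decide)
    have hmm : {p | inMins t p} = {p | inMins t' p} := by
      by_cases h1 : {p | inMins t p} = ∅ <;> by_cases h2 : {p | inMins t' p} = ∅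
      · rw [h1, h2]
      · rw [if_pos h1, if_neg h2] at hif
        exact absurd (hif ▸ rfl : [] ∈ {p | inMins t' p}) (hnilmem t' hc')
      · rw [if_neg h1, if_pos h2] at hif
        exact absurd (hif ▸ rfl : [] ∈ {p | inMins t p}) (hnilmem t hc)
      · rwa [if_neg h1, if_neg h2] at hif
    exact eq_of_strip_mins t t' hv hv' (hc.trans hc'.symm) hst
      (fun p => Set.ext_iff.mp hmm p)
  have hS0card : S0.ncard = antichainCount n := by
    have : antichainCount n = Pn.ncard := rfl
    rw [this, ← hΦP, Set.ncard_image_of_injOn hΦinj]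
  -- finiteness of Pn and S0
  have hPfin : Pn.Finite := by
    have hsub : Pn ⊆ ⋃ u ∈ U, (fun S => (u, S)) '' {S | S ⊆ {p | IsVertex u p}} := by
      rintro ⟨u, S⟩ ⟨hsz, hne, hvert, -⟩
      exact Set.mem_biUnion (hsz : u ∈ U) ⟨S, fun p hp => hvert p hp, rfl⟩
    exact Set.Finite.subset
      (Set.Finite.biUnion hUfin fun u _ =>
        Set.Finite.image _ (finite_isVertex u).finite_subsets) hsub
  have hS0fin : S0.Finite := Set.Finite.of_finite_image (hΦP ▸ hPfin) hΦinj
  -- splitting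
  have hsplit : {t : CTree (Fin 2) | t.Valid A ∧ t.size = n} = S0 ∪ S1 := by
    ext t
    simp only [Set.mem_union, hS0def, hS1def, Set.mem_setOf_eq]
    constructor
    · rintro ⟨hv, hsz⟩
      rcases (by omega : t.color = 0 ∨ t.color = 1) with h | h
      · exact Or.inl ⟨hv, hsz, h⟩
      · exact Or.inr ⟨hv, hsz, h⟩
    · rintro (⟨hv, hsz, -⟩ | ⟨hv, hsz, -⟩) <;> exact ⟨hv, hsz⟩
  have hdisj : Disjoint S0 S1 := by
    rw [Set.disjoint_left]
    rintro t ⟨-, -, h0⟩ ⟨-, -, h1⟩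
    rw [h0] at h1
    exact absurd h1 (by decide)
  have : totalCount A n = (S0 ∪ S1).ncard := by rw [totalCount, hsplit]
  rw [this, Set.ncard_union_eq hdisj hS0fin hS1fin, hS0card, hS1card, Nat.add_comm]
/-- For the matrix `[[1,1],[0,1]]`, the number of colored plane trees on `n ≥ 2` vertices
equals `C_{n-1} + D_n`. -/
theorem stmt19 (n : ℕ) (hn : 2 ≤ n) :
    totalCount (!![1, 1; 0, 1] : Matrix (Fin 2) (Fin 2) ℕ) n =
      catalan (n - 1) + antichainCount n := by
  exact stmt19' n hn
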